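/- arXiv:2310.13930 — 9 statements merged into one kernel-verified Lean document; each statement's English description precedes it below -/
import Mathlib

section
/- Let z, i, L be natural numbers with L ≥ 1 and i ≤ z. Then T^i(2^z + L) = T^i(L) + 3^{α_i(L)} · 2^{z−i}, where T^i denotes the i-fold iterate of the shortcut Collatz map T and α_i(L) is the number of indices j < i such that T^j(L) is odd. -/
/-- The shortcut Collatz map: `T x = (3x+1)/2` if `x` is odd, `x/2` if `x` is even. -/
def T (x : ℕ) : ℕ := if Odd x then (3 * x + 1) / 2 else x / 2

/-- `alpha i L` is the number of indices `j < i` such that `T^[j] L` is odd. -/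
def alpha (i L : ℕ) : ℕ := ((Finset.range i).filter (fun j => Odd (T^[j] L))).card

lemma alpha_succ (i L : ℕ) :
    alpha (i + 1) L = alpha i L + (if Odd (T^[i] L) then 1 else 0) := by
  unfold alpha
  rw [Finset.range_add_one, Finset.filter_insert]
  split <;> simp [Finset.card_insert_of_notMem]

theorem stmt0 (z i L : ℕ) (hL : 1 ≤ L) (hi : i ≤ z) :
    T^[i] (2 ^ z + L) = T^[i] L + 3 ^ (alpha i L) * 2 ^ (z - i) := by
  induction i with
  | zero => simp [alpha, Nat.add_comm]
  | succ i ih =>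
    have hiz : i < z := hi
    have ih' := ih hiz.le
    rw [Function.iterate_succ_apply', Function.iterate_succ_apply', ih', alpha_succ]
    have hzi : z - i = (z - (i + 1)) + 1 := by omega
    have h2 : Even (3 ^ alpha i L * 2 ^ (z - i)) :=
      ⟨3 ^ alpha i L * 2 ^ (z - (i + 1)), by rw [hzi]; ring⟩
    have hpar : Odd (T^[i] L + 3 ^ alpha i L * 2 ^ (z - i)) ↔ Odd (T^[i] L) := by
      rw [Nat.odd_add]; simp [h2]
    by_cases ho : Odd (T^[i] L)
    · simp only [T, if_pos ho, if_pos (hpar.mpr ho)]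
      obtain ⟨k, hk⟩ := ho
      rw [hzi]
      ring_nf
      omega
    · simp only [T, if_neg ho, if_neg (fun h => ho (hpar.mp h))]
      have he : Even (T^[i] L) := Nat.not_odd_iff_even.mp ho
      obtain ⟨k, hk⟩ := he
      rw [hzi]
      ring_nf
      omega
end

section
/- Let L ≥ 1, m, D be natural numbers with 2^m dividing D. Then for every i ≤ m, T^i(L + D) = T^i(L) + 3^{α_i(L)} · (D / 2^i); in particular, T^i(L + D) ≡ T^i(L) (mod 2) for every i < m. -/
theorem stmt2 (L m D : ℕ) (hL : 1 ≤ L) (hD : 2 ^ m ∣ D) :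
    (∀ i ≤ m, T^[i] (L + D) = T^[i] L + 3 ^ (alpha i L) * (D / 2 ^ i)) ∧
    (∀ i < m, T^[i] (L + D) % 2 = T^[i] L % 2) := by
  have alpha_succ : ∀ i, alpha (i + 1) L =
      alpha i L + (if Odd (T^[i] L) then 1 else 0) := by
    intro i
    simp only [alpha, Finset.range_add_one, Finset.filter_insert]
    split
    · rw [Finset.card_insert_of_notMem (by simp)]
    · rfl
  have main : ∀ i ≤ m, T^[i] (L + D) = T^[i] L + 3 ^ (alpha i L) * (D / 2 ^ i) := by
    intro i hi
    induction i with
    | zero => simp [alpha]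
    | succ n ih =>
      have hn : n ≤ m := Nat.le_of_succ_le hi
      have H := ih hn
      have h2 : 2 ^ (n + 1) ∣ D := dvd_trans (pow_dvd_pow 2 hi) hD
      obtain ⟨k, hk⟩ := h2
      have hDn : D / 2 ^ n = 2 * k := by
        rw [hk, pow_succ]
        rw [show 2 ^ n * 2 * k = 2 ^ n * (2 * k) by ring]
        exact Nat.mul_div_cancel_left _ (by positivity)
      have hDn1 : D / 2 ^ (n + 1) = k := by
        rw [hk]; exact Nat.mul_div_cancel_left _ (by positivity)
      set x := T^[n] L with hx
      set a := alpha n L with ha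
      rw [Function.iterate_succ_apply', Function.iterate_succ_apply', H, hDn, hDn1,
        alpha_succ]
      have hpar : Odd (x + 3 ^ a * (2 * k)) ↔ Odd x := by
        rw [Nat.odd_add]
        simp [Nat.even_mul]
      by_cases hodd : Odd x
      · rw [if_pos hodd]
        simp only [T, ← hx, ← ha, if_pos (hpar.mpr hodd), if_pos hodd]
        rw [show 3 * (x + 3 ^ a * (2 * k)) + 1 = (3 * x + 1) + 2 * (3 ^ (a + 1) * k) by ring]
        rw [Nat.add_mul_div_left _ _ (by norm_num)]
      · rw [if_neg hodd]
        simp only [T, ← hx, ← ha, if_neg (fun h => hodd (hpar.mp h)), if_neg hodd]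
        rw [show x + 3 ^ a * (2 * k) = x + 2 * (3 ^ a * k) by ring]
        rw [Nat.add_mul_div_left _ _ (by norm_num)]
        simp
  refine ⟨main, fun i hi => ?_⟩
  have H := main i (le_of_lt hi)
  have h2 : 2 ^ (i + 1) ∣ D := dvd_trans (pow_dvd_pow 2 hi) hD
  obtain ⟨k, hk⟩ := h2
  have hDi : D / 2 ^ i = 2 * k := by
    rw [hk, pow_succ, show 2 ^ i * 2 * k = 2 ^ i * (2 * k) by ring]
    exact Nat.mul_div_cancel_left _ (by positivity)
  rw [H, hDi, show 3 ^ alpha i L * (2 * k) = 2 * (3 ^ alpha i L * k) by ring]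
  omega
end

section
/- (Theorem 2.2, uniqueness of chains) Let n ≥ 1 and let L and M be odd natural numbers with 2^n < L ≤ 2^{n+1} and 2^n < M ≤ 2^{n+1}. If T^i(L) ≡ T^i(M) (mod 2) for every i < n, then L = M. -/
lemma T_odd (x : ℕ) (hx : Odd x) : 3 * x + 1 = 2 * T x := by
  have h2 : 2 ∣ 3 * x + 1 := by
    obtain ⟨k, rfl⟩ := hx; omega
  simp [T, hx]
  omega

lemma T_even (x : ℕ) (hx : ¬ Odd x) : x = 2 * T x := by
  simp [T, hx]
  rw [Nat.not_odd_iff_even] at hx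
  obtain ⟨k, rfl⟩ := hx; omega

lemma key (n : ℕ) : ∀ L M : ℕ, (∀ i < n, T^[i] L % 2 = T^[i] M % 2) →
    L % 2 ^ n = M % 2 ^ n := by
  induction n with
  | zero => simp [Nat.mod_one]
  | succ n ih =>
    intro L M h
    have h0 : L % 2 = M % 2 := by simpa using h 0 (Nat.succ_pos n)
    have hT : T L % 2 ^ n = T M % 2 ^ n := by
      apply ih
      intro i hi
      have := h (i + 1) (by omega)
      simpa [Function.iterate_succ_apply] using this
    have hp : 2 ^ (n + 1) = 2 * 2 ^ n := by ring
    by_cases hL : Odd L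
    · have hM : Odd M := by
        rw [Nat.odd_iff] at hL ⊢; omega
      have e1 := T_odd L hL
      have e2 := T_odd M hM
      have : (3 * L + 1) % 2 ^ (n + 1) = (3 * M + 1) % 2 ^ (n + 1) := by
        rw [e1, e2, hp, Nat.mul_mod_mul_left, Nat.mul_mod_mul_left, hT]
      have h3 : 3 * L ≡ 3 * M [MOD 2 ^ (n + 1)] := by
        have : 3 * L + 1 ≡ 3 * M + 1 [MOD 2 ^ (n + 1)] := this
        exact Nat.ModEq.add_right_cancel' 1 this
      have hcop : Nat.Coprime 3 (2 ^ (n + 1)) := by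
        apply Nat.Coprime.pow_right
        decide
      exact (Nat.ModEq.cancel_left_of_coprime (by simpa using hcop.gcd_eq_one) h3)
    · have hM : ¬ Odd M := by
        rw [Nat.odd_iff] at hL ⊢; omega
      have e1 := T_even L hL
      have e2 := T_even M hM
      rw [e1, e2, hp, Nat.mul_mod_mul_left, Nat.mul_mod_mul_left, hT]

theorem stmt3 (n L M : ℕ) (hn : 1 ≤ n)
    (hLodd : Odd L) (hModd : Odd M)
    (hL1 : 2 ^ n < L) (hL2 : L ≤ 2 ^ (n + 1))
    (hM1 : 2 ^ n < M) (hM2 : M ≤ 2 ^ (n + 1))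
    (h : ∀ i < n, T^[i] L % 2 = T^[i] M % 2) :
    L = M := by
  have hk := key n L M h
  have hK : 0 < 2 ^ n := Nat.pow_pos (n := n) (by norm_num)
  have hL2' : L < 2 ^ (n + 1) := by
    rcases lt_or_eq_of_le hL2 with h' | h'
    · exact h'
    · exfalso
      rw [Nat.odd_iff, h'] at hLodd
      have : 2 ^ (n + 1) % 2 = 0 := by
        simp [Nat.pow_succ, Nat.mul_mod]
      omega
  have hM2' : M < 2 ^ (n + 1) := by
    rcases lt_or_eq_of_le hM2 with h' | h'
    · exact h'
    · exfalso
      rw [Nat.odd_iff, h'] at hModd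
      have : 2 ^ (n + 1) % 2 = 0 := by
        simp [Nat.pow_succ, Nat.mul_mod]
      omega
  have hp : 2 ^ (n + 1) = 2 * 2 ^ n := by ring
  have eL : L % 2 ^ n = L - 2 ^ n := by
    rw [Nat.mod_eq_sub_mod (le_of_lt hL1), Nat.mod_eq_of_lt (by omega)]
  have eM : M % 2 ^ n = M - 2 ^ n := by
    rw [Nat.mod_eq_sub_mod (le_of_lt hM1), Nat.mod_eq_of_lt (by omega)]
  omega
end

section
/- Let n ≥ 1. The map sending an odd natural number L with 2^n < L ≤ 2^{n+1} to its parity vector v : Fin n → Bool defined by v(i) = (T^i(L) is odd) is a bijection from the set of odd integers in (2^n, 2^{n+1}] onto the set of vectors v : Fin n → Bool with v(0) = true; in particular both sets have cardinality 2^{n−1}. -/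
lemma key_s4 : ∀ k a b, (∀ i < k, (Odd (T^[i] a) ↔ Odd (T^[i] b))) → a ≡ b [MOD 2^k] := by
  intro k
  induction k with
  | zero => intro a b _; simpa using Nat.modEq_one
  | succ k ih =>
    intro a b h
    have h0 : Odd a ↔ Odd b := by simpa using h 0 k.succ_pos
    have hT : T a ≡ T b [MOD 2^k] := ih (T a) (T b) (fun i hi => by
      have := h (i+1) (by omega)
      simpa [Function.iterate_succ_apply] using this)
    have h2 : 2 * T a ≡ 2 * T b [MOD 2^(k+1)] := by
      have := hT.mul_left' (c := 2)
      rwa [show (2:ℕ) * 2^k = 2^(k+1) by ring] at this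
    by_cases ha : Odd a
    · have hb : Odd b := h0.mp ha
      have e1 : 2 * T a = 3 * a + 1 := by
        simp only [T, if_pos ha]; obtain ⟨c, hc⟩ := ha; omega
      have e2 : 2 * T b = 3 * b + 1 := by
        simp only [T, if_pos hb]; obtain ⟨d, hd⟩ := hb; omega
      rw [e1, e2] at h2
      have h4 : 3 * a ≡ 3 * b [MOD 2^(k+1)] := h2.add_right_cancel' 1
      exact h4.cancel_left_of_coprime
        (Nat.Coprime.pow_left (k+1) (by decide : Nat.Coprime 2 3))
    · have hb : ¬ Odd b := fun hb => ha (h0.mpr hb)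
      have e1 : 2 * T a = a := by
        simp only [T, if_neg ha]
        rw [Nat.not_odd_iff_even] at ha; obtain ⟨c, hc⟩ := ha; omega
      have e2 : 2 * T b = b := by
        simp only [T, if_neg hb]
        rw [Nat.not_odd_iff_even] at hb; obtain ⟨d, hd⟩ := hb; omega
      rwa [e1, e2] at h2

theorem stmt4 (n : ℕ) (hn : 1 ≤ n) :
    Set.BijOn (fun L : ℕ => fun i : Fin n => decide (Odd (T^[(i : ℕ)] L)))
      {L : ℕ | Odd L ∧ 2 ^ n < L ∧ L ≤ 2 ^ (n + 1)}
      {v : Fin n → Bool | v ⟨0, hn⟩ = true} ∧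
    Nat.card {L : ℕ | Odd L ∧ 2 ^ n < L ∧ L ≤ 2 ^ (n + 1)} = 2 ^ (n - 1) ∧
    Nat.card {v : Fin n → Bool | v ⟨0, hn⟩ = true} = 2 ^ (n - 1) := by
  obtain ⟨m, rfl⟩ : ∃ m, n = m + 1 := ⟨n - 1, by omega⟩
  set S : Set ℕ := {L : ℕ | Odd L ∧ 2 ^ (m+1) < L ∧ L ≤ 2 ^ (m + 2)} with hSdef
  set V : Set (Fin (m+1) → Bool) := {v | v ⟨0, hn⟩ = true} with hVdef
  set f : ℕ → (Fin (m+1) → Bool) := fun L => fun i : Fin (m+1) => decide (Odd (T^[(i : ℕ)] L)) with hf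
  -- cardinality of S
  have hpow : (2:ℕ)^(m+2) = 2 * 2^(m+1) := by ring
  have hpow2 : (2:ℕ)^(m+1) = 2 * 2^m := by ring
  have cardS : Nat.card S = 2 ^ m := by
    have hb : Function.Bijective (fun k : Fin (2^m) =>
        (⟨2^(m+1) + 2*(k:ℕ) + 1, by
          constructor
          · exact ⟨2^m + k, by omega⟩
          · have := k.isLt; omega⟩ : S)) := by
      constructor
      · intro k1 k2 he
        have : (2:ℕ)^(m+1) + 2*(k1:ℕ) + 1 = 2^(m+1) + 2*(k2:ℕ) + 1 := congrArg Subtype.val he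
        exact Fin.ext (by omega)
      · rintro ⟨L, hodd, hlo, hhi⟩
        obtain ⟨c, hc⟩ := hodd
        refine ⟨⟨c - 2^m, by omega⟩, ?_⟩
        apply Subtype.ext
        simp only
        omega
    have := Nat.card_eq_of_bijective _ hb
    simpa using this.symm
  -- cardinality of V
  have cardV : Nat.card V = 2 ^ m := by
    have hzero : (⟨0, hn⟩ : Fin (m+1)) = 0 := rfl
    have hb : Function.Bijective (fun w : Fin m → Bool =>
        (⟨Fin.cons true w, by simp [hVdef, hzero]⟩ : V)) := by
      constructor
      · intro w1 w2 he
        have h1 : (Fin.cons true w1 : Fin (m+1) → Bool) = Fin.cons true w2 :=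
          congrArg Subtype.val he
        funext i
        have := congrFun h1 i.succ
        simpa [Fin.cons_succ] using this
      · rintro ⟨v, hv⟩
        refine ⟨Fin.tail v, Subtype.ext ?_⟩
        have h0 : v 0 = true := hv
        calc (Fin.cons true (Fin.tail v) : Fin (m+1) → Bool)
            = Fin.cons (v 0) (Fin.tail v) := by rw [h0]
          _ = v := Fin.cons_self_tail v
    have := Nat.card_eq_of_bijective _ hb
    simpa using this.symm
  -- MapsTo
  have hmaps : Set.MapsTo f S V := by
    rintro L ⟨hodd, -, -⟩
    simp only [hVdef, Set.mem_setOf_eq, hf]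
    exact decide_eq_true hodd
  -- InjOn
  have hinj : Set.InjOn f S := by
    rintro L1 ⟨h1o, h1lo, h1hi⟩ L2 ⟨h2o, h2lo, h2hi⟩ he
    have hiff : ∀ i < m + 1, (Odd (T^[i] L1) ↔ Odd (T^[i] L2)) := by
      intro i hi
      have := congrFun he ⟨i, hi⟩
      simpa [hf] using this
    have hmod : L1 ≡ L2 [MOD 2^(m+1)] := key_s4 (m+1) L1 L2 hiff
    rcases le_total L1 L2 with hle | hle
    · have hdvd : 2^(m+1) ∣ L2 - L1 := (Nat.modEq_iff_dvd' hle).mp hmod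
      rcases Nat.eq_zero_or_pos (L2 - L1) with h0 | h0
      · omega
      · have := Nat.le_of_dvd h0 hdvd; omega
    · have hdvd : 2^(m+1) ∣ L1 - L2 := (Nat.modEq_iff_dvd' hle).mp hmod.symm
      rcases Nat.eq_zero_or_pos (L1 - L2) with h0 | h0
      · omega
      · have := Nat.le_of_dvd h0 hdvd; omega
  -- SurjOn via cardinality
  have hSfin : S.Finite := Set.Finite.subset (Set.finite_Iic (2^(m+2))) (fun x hx => hx.2.2)
  have hVfin : V.Finite := Set.toFinite V
  have hncS : S.ncard = 2 ^ m := by rw [← Nat.card_coe_set_eq]; exact cardS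
  have hncV : V.ncard = 2 ^ m := by rw [← Nat.card_coe_set_eq]; exact cardV
  have himg : f '' S = V := by
    exact Set.eq_of_subset_of_ncard_le (hmaps.image_subset)
      (by rw [Set.ncard_image_of_injOn hinj, hncS, hncV]) hVfin
  refine ⟨⟨hmaps, hinj, himg.symm.subset⟩, ?_, ?_⟩
  · simpa using cardS
  · simpa using cardV
end

section
/- (Lemma 3.1) Let u ≥ 2 be a natural number and write θ = log₂ 3. The set {β ∈ ℕ : β ≥ u and 2^{β−1} > 3^{β−u}} is nonempty and has a greatest element, which equals ⌊(u·θ − 1)/(θ − 1)⌋; moreover this greatest element minus u equals ⌊(u − 1)/(θ − 1)⌋. -/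
private lemma key32 (a b : ℕ) : (3:ℕ)^a < 2^b ↔ (a:ℝ) * Real.logb 2 3 < b := by
  rw [← Nat.cast_lt (α := ℝ)]
  push_cast
  rw [← Real.logb_lt_logb_iff (b := 2) (by norm_num) (by positivity) (by positivity)]
  rw [Real.logb_pow, Real.logb_pow, Real.logb_self_eq_one (by norm_num)]
  ring_nf

private lemma key23 (a b : ℕ) : (2:ℕ)^b < 3^a ↔ (b:ℝ) < (a:ℝ) * Real.logb 2 3 := by
  rw [← Nat.cast_lt (α := ℝ)]
  push_cast
  rw [← Real.logb_lt_logb_iff (b := 2) (by norm_num) (by positivity) (by positivity)]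
  rw [Real.logb_pow, Real.logb_pow, Real.logb_self_eq_one (by norm_num)]
  ring_nf

private lemma theta_gt : (1:ℝ) < Real.logb 2 3 := by
  rw [show (1:ℝ) = Real.logb 2 2 by rw [Real.logb_self_eq_one] <;> norm_num]
  exact Real.logb_lt_logb (by norm_num) (by norm_num) (by norm_num)

theorem stmt5 (u : ℕ) (hu : 2 ≤ u) :
    {β : ℕ | u ≤ β ∧ 3 ^ (β - u) < 2 ^ (β - 1)}.Nonempty ∧
    ∃ B ∈ {β : ℕ | u ≤ β ∧ 3 ^ (β - u) < 2 ^ (β - 1)},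
      (∀ β ∈ {β : ℕ | u ≤ β ∧ 3 ^ (β - u) < 2 ^ (β - 1)}, β ≤ B) ∧
      B = ⌊((u : ℝ) * Real.logb 2 3 - 1) / (Real.logb 2 3 - 1)⌋₊ ∧
      B - u = ⌊((u : ℝ) - 1) / (Real.logb 2 3 - 1)⌋₊ := by
  set θ := Real.logb 2 3 with hθdef
  have hθ : (1:ℝ) < θ := theta_gt
  have hpos : (0:ℝ) < θ - 1 := by linarith
  have hx : (0:ℝ) ≤ ((u:ℝ) - 1) / (θ - 1) := by
    apply div_nonneg _ hpos.le
    have : (2:ℝ) ≤ u := by exact_mod_cast hu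
    linarith
  set α₀ := ⌊((u:ℝ) - 1) / (θ - 1)⌋₊ with hα₀
  set B := u + α₀ with hB
  have hfl : (α₀:ℝ) ≤ ((u:ℝ) - 1) / (θ - 1) := Nat.floor_le hx
  have hfl2 : ((u:ℝ) - 1) / (θ - 1) < (α₀:ℝ) + 1 := Nat.lt_floor_add_one _
  have h1 : (α₀:ℝ) * (θ - 1) ≤ (u:ℝ) - 1 := by
    rw [← le_div_iff₀ hpos]; exact hfl
  -- strictness
  have hstrict : (α₀:ℝ) * θ < (α₀:ℝ) + (u:ℝ) - 1 := by
    rcases lt_or_eq_of_le h1 with h | h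
    · nlinarith
    · exfalso
      have heq : (α₀:ℝ) * θ = ((α₀ + u - 1 : ℕ) : ℝ) := by
        have : ((α₀ + u - 1 : ℕ) : ℝ) = (α₀:ℝ) + (u:ℝ) - 1 := by
          push_cast [Nat.cast_sub (by omega : 1 ≤ α₀ + u)]; ring
        rw [this]; nlinarith
      have hn1 : ¬ (3:ℕ)^α₀ < 2^(α₀ + u - 1) := by
        rw [key32]; rw [heq]; exact lt_irrefl _
      have hn2 : ¬ (2:ℕ)^(α₀ + u - 1) < 3^α₀ := by
        rw [key23]; rw [heq]; exact lt_irrefl _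
      have heqn : (3:ℕ)^α₀ = 2^(α₀ + u - 1) := by omega
      have h2 : 2 ∣ (3:ℕ)^α₀ := heqn ▸ dvd_pow_self 2 (by omega)
      have := Nat.Prime.dvd_of_dvd_pow (p := 2) (by norm_num) h2
      norm_num at this
  have hBmem : B ∈ {β : ℕ | u ≤ β ∧ 3 ^ (β - u) < 2 ^ (β - 1)} := by
    constructor
    · omega
    · have : B - u = α₀ := by omega
      rw [this]
      have hb1 : B - 1 = α₀ + u - 1 := by omega
      rw [hb1, key32]
      have : ((α₀ + u - 1 : ℕ) : ℝ) = (α₀:ℝ) + (u:ℝ) - 1 := by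
        push_cast [Nat.cast_sub (by omega : 1 ≤ α₀ + u)]; ring
      rw [this]; exact hstrict
  refine ⟨⟨B, hBmem⟩, B, hBmem, ?_, ?_, ?_⟩
  · rintro β ⟨hβu, hβ⟩
    have hcast : ((β - 1 : ℕ) : ℝ) = (β:ℝ) - 1 := by
      push_cast [Nat.cast_sub (by omega : 1 ≤ β)]; ring
    have hcast2 : ((β - u : ℕ) : ℝ) = (β:ℝ) - u := by
      push_cast [Nat.cast_sub hβu]; ring
    rw [key32, hcast, hcast2] at hβ
    have hle : ((β:ℝ) - u) ≤ ((u:ℝ) - 1) / (θ - 1) := by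
      rw [le_div_iff₀ hpos]; nlinarith
    have : β - u ≤ α₀ := by
      apply Nat.le_floor
      rw [hcast2]
      exact hle
    omega
  · have heq : ((u:ℝ) * θ - 1) / (θ - 1) = ((u:ℝ) - 1) / (θ - 1) + u := by
      field_simp; ring
    rw [heq, Nat.floor_add_natCast hx, hB]; omega
  · omega
end

section
/- Let u ≥ 2 be a natural number, let β = ⌊(u·log₂3 − 1)/(log₂3 − 1)⌋ and α = β − u. Then 3^{α} < 2^{β−1} < (3/2)·3^{α}; that is, 1 < 2^{β−1}/3^{α} < 3/2. -/
theorem stmt6 (u : ℕ) (hu : 2 ≤ u) :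
    ∀ β α : ℕ,
      β = ⌊((u : ℝ) * Real.logb 2 3 - 1) / (Real.logb 2 3 - 1)⌋₊ →
      α = β - u →
      (3 : ℝ) ^ α < 2 ^ (β - 1) ∧ (2 : ℝ) ^ (β - 1) < (3 / 2) * 3 ^ α := by
  intro β α hβ hα
  set L : ℝ := Real.logb 2 3 with hL
  have hL1 : 1 < L := by
    have : Real.logb 2 2 < Real.logb 2 3 := by
      apply Real.logb_lt_logb (by norm_num) (by norm_num) (by norm_num)
    simpa [Real.logb_self_eq_one] using this
  have hL2 : L < 2 := by
    have h4 : Real.logb 2 3 < Real.logb 2 4 := by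
      apply Real.logb_lt_logb (by norm_num) (by norm_num) (by norm_num)
    have : Real.logb 2 4 = 2 := by
      rw [show (4:ℝ) = 2^(2:ℕ) by norm_num, Real.logb_pow]
      simp [Real.logb_self_eq_one]
    linarith
  have hden : (0:ℝ) < L - 1 := by linarith
  have hu' : (2:ℝ) ≤ u := by exact_mod_cast hu
  set x : ℝ := ((u : ℝ) * L - 1) / (L - 1) with hx
  -- β ≥ u + 1
  have hux : (u:ℝ) + 1 ≤ x := by
    rw [hx, le_div_iff₀ hden]
    nlinarith
  have hx0 : (0:ℝ) ≤ x := by linarith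
  have hβu : u + 1 ≤ β := by
    rw [hβ]
    rw [Nat.le_floor_iff hx0]
    push_cast; linarith
  have hβx : (β:ℝ) ≤ x := by
    rw [hβ]; exact Nat.floor_le hx0
  have hxβ : x < (β:ℝ) + 1 := by rw [hβ]; exact Nat.lt_floor_add_one x
  have hcastα : (α:ℝ) = (β:ℝ) - u := by
    rw [hα]; push_cast [Nat.cast_sub (by omega : u ≤ β)]; ring
  have hcastb : ((β - 1 : ℕ):ℝ) = (β:ℝ) - 1 := by
    push_cast [Nat.cast_sub (by omega : 1 ≤ β)]; ring
  have h23 : (2:ℝ) ^ L = 3 := Real.rpow_logb (by norm_num) (by norm_num) (by norm_num)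
  have h3a : (3:ℝ) ^ α = (2:ℝ) ^ (L * α) := by
    rw [← h23, ← Real.rpow_natCast ((2:ℝ)^L) α, ← Real.rpow_mul (by norm_num)]
  have h2b : (2:ℝ) ^ (β - 1) = (2:ℝ) ^ (((β-1:ℕ)):ℝ) := by
    rw [Real.rpow_natCast]
  -- key inequality 1 (non-strict): L * α ≤ β - 1
  have hle : L * α ≤ (β:ℝ) - 1 := by
    rw [hcastα]
    have := (le_div_iff₀ hden).mp hβx
    nlinarith
  -- strictness
  have hne : L * α ≠ (β:ℝ) - 1 := by
    intro heq
    have hpow : (3:ℝ) ^ α = (2:ℝ) ^ (β - 1) := by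
      rw [h3a, h2b, hcastb, heq]
    have hnat : (3:ℕ) ^ α = 2 ^ (β - 1) := by
      exact_mod_cast hpow
    have hb1 : 1 ≤ β - 1 := by omega
    have hodd : (3:ℕ) ^ α % 2 = 1 := by
      rw [Nat.pow_mod]; norm_num
    have heven : (2:ℕ) ^ (β - 1) % 2 = 0 := by
      have hd : (2:ℕ) ∣ 2 ^ (β - 1) := dvd_pow_self 2 (by omega)
      omega
    rw [hnat] at hodd
    omega
  have hlt1 : L * α < (β:ℝ) - 1 := lt_of_le_of_ne hle hne
  -- key inequality 2: β < L * (α + 1), i.e. β - 1 < L*(α+1) - 1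
  have hlt2 : (β:ℝ) - 1 < L * (α + 1) - 1 := by
    rw [hcastα]
    have := (div_lt_iff₀ hden).mp hxβ
    nlinarith
  constructor
  · rw [h3a, h2b]
    apply Real.rpow_lt_rpow_of_exponent_lt (by norm_num)
    rw [hcastb]; exact hlt1
  · have hrhs : (3/2 : ℝ) * 3 ^ α = (2:ℝ) ^ (L * (α + 1) - 1) := by
      have : (3/2 : ℝ) * 3 ^ α = 3 ^ α * 3 / 2 := by ring
      rw [this, h3a, ← h23]
      rw [Real.rpow_sub (by norm_num), ← Real.rpow_add (by norm_num)]
      rw [Real.rpow_one]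
      ring_nf
    rw [hrhs, h2b]
    apply Real.rpow_lt_rpow_of_exponent_lt (by norm_num)
    rw [hcastb]; exact hlt2
end

section
/- (Lemma, Section 3) Define γ(n) to be the number of vectors v : Fin n → Bool such that v(0) = true and there exists m with 1 ≤ m ≤ n and 3^{w_m(v)} < 2^{m−1}, where w_m(v) = #{i < m : v(i) = true}. Then for every n ≥ 1, (γ(n+1) + 2^{n}) / 2^{n+1} ≥ (γ(n) + 2^{n−1}) / 2^{n}, where the quotients are taken in the real numbers. -/
/-- `gamma n` counts the chains of length `n` (encoded as parity vectors `v : Fin n → Bool`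
starting with a `true` entry, i.e. starting with `BA`) that are official or non-official
Collatz chains: some initial segment of length `m` (with `1 ≤ m ≤ n`) satisfies
`3 ^ (w_m v) < 2 ^ (m - 1)`, where `w_m v` is the number of `true` entries among the
first `m` entries. -/
def gamma (n : ℕ) : ℕ :=
  (Finset.univ.filter (fun v : Fin n → Bool =>
    (∀ i : Fin n, (i : ℕ) = 0 → v i = true) ∧
    ∃ m ∈ Finset.Icc 1 n,
      3 ^ ((Finset.univ.filter (fun i : Fin n => (i : ℕ) < m ∧ v i = true)).card)
        < 2 ^ (m - 1))).card

def extChain {n : ℕ} (v : Fin n → Bool) (b : Bool) : Fin (n + 1) → Bool :=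
  fun i => if h : (i : ℕ) < n then v ⟨i, h⟩ else b

lemma filt_card {n m : ℕ} (hm : m ≤ n) (v : Fin n → Bool) (b : Bool) :
    (Finset.univ.filter (fun i : Fin (n + 1) => (i : ℕ) < m ∧ extChain v b i = true)).card
    = (Finset.univ.filter (fun i : Fin n => (i : ℕ) < m ∧ v i = true)).card := by
  apply Finset.card_bij (fun (i : Fin (n + 1)) hi => (⟨(i : ℕ), by
    simp only [Finset.mem_filter] at hi; omega⟩ : Fin n))
  · intro a ha
    simp only [Finset.mem_filter, Finset.mem_univ, true_and] at ha ⊢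
    obtain ⟨h1, h2⟩ := ha
    refine ⟨h1, ?_⟩
    rw [extChain] at h2
    simpa [show (a : ℕ) < n by omega] using h2
  · intro a ha a' ha' h
    apply Fin.ext
    simpa using congrArg Fin.val h
  · intro bb hb
    simp only [Finset.mem_filter, Finset.mem_univ, true_and] at hb
    refine ⟨⟨(bb : ℕ), by omega⟩, ?_, by simp⟩
    simp only [Finset.mem_filter, Finset.mem_univ, true_and]
    refine ⟨hb.1, ?_⟩
    rw [extChain]
    simpa [bb.isLt] using hb.2

lemma gamma_double {n : ℕ} (hn : 1 ≤ n) : 2 * gamma n ≤ gamma (n + 1) := by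
  unfold gamma
  set S := (Finset.univ.filter (fun v : Fin n → Bool =>
    (∀ i : Fin n, (i : ℕ) = 0 → v i = true) ∧
    ∃ m ∈ Finset.Icc 1 n,
      3 ^ ((Finset.univ.filter (fun i : Fin n => (i : ℕ) < m ∧ v i = true)).card)
        < 2 ^ (m - 1))) with hS
  set T := (Finset.univ.filter (fun v : Fin (n + 1) → Bool =>
    (∀ i : Fin (n + 1), (i : ℕ) = 0 → v i = true) ∧
    ∃ m ∈ Finset.Icc 1 (n + 1),
      3 ^ ((Finset.univ.filter (fun i : Fin (n + 1) => (i : ℕ) < m ∧ v i = true)).card)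
        < 2 ^ (m - 1))) with hT
  have hcard : (S ×ˢ (Finset.univ : Finset Bool)).card = S.card * 2 := by
    simp [Finset.card_product]
  have hinj : (S ×ˢ (Finset.univ : Finset Bool)).card ≤ T.card := by
    apply Finset.card_le_card_of_injOn (fun p => extChain p.1 p.2)
    · intro p hp
      simp only [Finset.mem_coe, Finset.mem_product, hS, Finset.mem_filter, Finset.mem_univ, true_and] at hp
      obtain ⟨⟨h0, m, hm, hlt⟩, -⟩ := hp
      simp only [Finset.mem_coe, hT, Finset.mem_filter, Finset.mem_univ, true_and]
      constructor
      · intro i hi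
        rw [extChain]
        have : (i : ℕ) < n := by omega
        simp only [this, dif_pos]
        exact h0 _ hi
      · refine ⟨m, ?_, ?_⟩
        · simp only [Finset.mem_Icc] at hm ⊢; omega
        · rw [filt_card (by simp only [Finset.mem_Icc] at hm; omega)]
          exact hlt
    · intro p hp q hq h
      have hv : p.1 = q.1 := by
        funext i
        have := congrFun h (Fin.castSucc i)
        simpa [extChain, i.isLt] using this
      have hb : p.2 = q.2 := by
        have := congrFun h (Fin.last n)
        simpa [extChain, Fin.last] using this
      exact Prod.ext hv hb
  omega

theorem stmt9 (n : ℕ) (hn : 1 ≤ n) :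
    ((gamma (n + 1) : ℝ) + 2 ^ n) / 2 ^ (n + 1) ≥ ((gamma n : ℝ) + 2 ^ (n - 1)) / 2 ^ n := by
  have key : (2 : ℝ) * gamma n ≤ gamma (n + 1) := by
    exact_mod_cast gamma_double hn
  have h1 : (2 : ℝ) ^ (n - 1) * 2 = 2 ^ n := by
    rw [← pow_succ]; congr 1; omega
  have h2 : (2 : ℝ) ^ (n + 1) = 2 ^ n * 2 := by rw [pow_succ]
  have hpos : (0 : ℝ) < 2 ^ n := by positivity
  rw [ge_iff_le, div_le_div_iff₀ (by positivity) (by positivity), h2]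
  nlinarith [key, h1, hpos]
end

section
/- Let A_1 ⊆ A_2 ⊆ … ⊆ A_n be finite sets with |A_i| = k_i for each i. Then the number of distinct multisets {a_1, a_2, …, a_n} obtainable by choosing a_i ∈ A_i for each i equals the number of monotone nondecreasing tuples (m_1, m_2, …, m_n) of positive integers with m_1 ≤ m_2 ≤ … ≤ m_n and m_i ≤ k_i for each i (equivalently, the nested sum ∑_{m_1=1}^{k_1} ∑_{m_2=m_1}^{k_2} … ∑_{m_n=m_{n−1}}^{k_n} 1). -/
namespace Stmt10Aux

noncomputable section
variable {X : Type*} [DecidableEq X] {n : ℕ}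

def lev (A : Fin (n+1) → Finset X) (x : X) : ℕ :=
  n + 1 - (Finset.univ.filter (fun i => x ∈ A i)).card

def idx (A : Fin (n+1) → Finset X) (x : X) : ℕ :=
  if h : x ∈ A (Fin.last n) then ((A (Fin.last n)).equivFin ⟨x, h⟩ : ℕ) else 0

def key (A : Fin (n+1) → Finset X) (x : X) : ℕ :=
  lev A x * ((A (Fin.last n)).card + 1) + idx A x

def rank (A : Fin (n+1) → Finset X) (x : X) : ℕ :=
  ((A (Fin.last n)).filter (fun y => key A y ≤ key A x)).card

variable {A : Fin (n+1) → Finset X}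

theorem mem_iff_lev (hchain : ∀ i j : Fin (n+1), i ≤ j → A i ⊆ A j) (x : X) (i : Fin (n+1)) :
    x ∈ A i ↔ lev A x ≤ i.1 := by
  constructor
  · intro hx
    have hsub : Finset.Ici i ⊆ Finset.univ.filter (fun j => x ∈ A j) := by
      intro j hj
      simp only [Finset.mem_Ici] at hj
      simp only [Finset.mem_filter, Finset.mem_univ, true_and]
      exact hchain i j hj hx
    have h1 := Finset.card_le_card hsub
    rw [Fin.card_Ici] at h1
    unfold lev
    omega
  · intro h
    set S := Finset.univ.filter (fun j => x ∈ A j) with hS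
    have hScard : S.card ≤ n + 1 := by
      calc S.card ≤ (Finset.univ : Finset (Fin (n+1))).card := Finset.card_filter_le _ _
      _ = n + 1 := by simp
    have hlev : lev A x = n + 1 - S.card := rfl
    have hi : i.1 ≤ n := Nat.lt_succ_iff.mp i.2
    have hpos : 0 < S.card := by omega
    have hne : S.Nonempty := Finset.card_pos.mp hpos
    set j := S.min' hne with hj
    have hjS : j ∈ S := S.min'_mem hne
    have hxj : x ∈ A j := by
      simp only [hS, Finset.mem_filter] at hjS; exact hjS.2
    have hsub : S ⊆ Finset.Ici j := by
      intro s hs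
      simp only [Finset.mem_Ici]
      exact S.min'_le s hs
    have h2 := Finset.card_le_card hsub
    rw [Fin.card_Ici] at h2
    have hji : j ≤ i := by
      rw [Fin.le_def]; omega
    exact hchain j i hji hxj

theorem idx_lt (hx : x ∈ A (Fin.last n)) : idx A x < (A (Fin.last n)).card := by
  rw [idx, dif_pos hx]
  exact ((A (Fin.last n)).equivFin ⟨x, hx⟩).2

theorem idx_le : idx A x ≤ (A (Fin.last n)).card := by
  by_cases hx : x ∈ A (Fin.last n)
  · exact (idx_lt hx).le
  · rw [idx, dif_neg hx]; exact Nat.zero_le _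

theorem idx_injOn (hx : x ∈ A (Fin.last n)) (hy : y ∈ A (Fin.last n))
    (h : idx A x = idx A y) : x = y := by
  rw [idx, dif_pos hx, idx, dif_pos hy] at h
  have := (A (Fin.last n)).equivFin.injective (Fin.val_injective h)
  exact congrArg Subtype.val this

theorem key_lt_key (h : lev A x < lev A y) : key A x < key A y := by
  have hx := idx_le (A := A) (x := x)
  have hy := idx_le (A := A) (x := y)
  rw [key, key]
  set K := (A (Fin.last n)).card
  calc lev A x * (K + 1) + idx A x < (lev A x + 1) * (K + 1) := by nlinarith
  _ ≤ lev A y * (K + 1) := Nat.mul_le_mul_right _ h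
  _ ≤ lev A y * (K + 1) + idx A y := Nat.le_add_right _ _

theorem lev_le_of_key_le (h : key A x ≤ key A y) : lev A x ≤ lev A y := by
  by_contra hc
  exact absurd (key_lt_key (lt_of_not_ge hc)) (not_lt.mpr h)

theorem key_injOn (hx : x ∈ A (Fin.last n)) (hy : y ∈ A (Fin.last n))
    (h : key A x = key A y) : x = y := by
  have h1 : lev A x = lev A y := le_antisymm (lev_le_of_key_le h.le) (lev_le_of_key_le h.ge)
  rw [key, key, h1] at h
  exact idx_injOn hx hy (by omega)

theorem rank_pos (hx : x ∈ A (Fin.last n)) : 1 ≤ rank A x := by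
  rw [rank, Nat.one_le_iff_ne_zero, ← Nat.pos_iff_ne_zero, Finset.card_pos]
  exact ⟨x, Finset.mem_filter.mpr ⟨hx, le_refl _⟩⟩

theorem rank_le_of_mem (hchain : ∀ i j : Fin (n+1), i ≤ j → A i ⊆ A j)
    {i : Fin (n+1)} (hx : x ∈ A i) : rank A x ≤ (A i).card := by
  apply Finset.card_le_card
  intro y hy
  rw [Finset.mem_filter] at hy
  have hlev : lev A y ≤ lev A x := lev_le_of_key_le hy.2
  have hxi : lev A x ≤ i.1 := (mem_iff_lev hchain x i).mp hx
  exact (mem_iff_lev hchain y i).mpr (le_trans hlev hxi)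

theorem mem_of_rank_le (hchain : ∀ i j : Fin (n+1), i ≤ j → A i ⊆ A j)
    {i : Fin (n+1)} (hx : x ∈ A (Fin.last n)) (h : rank A x ≤ (A i).card) : x ∈ A i := by
  by_contra hc
  have hlev : i.1 < lev A x := by
    have := (mem_iff_lev hchain x i).not.mp hc
    omega
  have hsub : insert x (A i) ⊆ (A (Fin.last n)).filter (fun y => key A y ≤ key A x) := by
    intro y hy
    rcases Finset.mem_insert.mp hy with rfl | hy
    · exact Finset.mem_filter.mpr ⟨hx, le_refl _⟩
    · refine Finset.mem_filter.mpr ⟨hchain i (Fin.last n) (Fin.le_last i) hy, ?_⟩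
      have : lev A y ≤ i.1 := (mem_iff_lev hchain y i).mp hy
      exact (key_lt_key (by omega)).le
  have := Finset.card_le_card hsub
  rw [Finset.card_insert_of_notMem hc] at this
  rw [rank] at h
  omega

theorem rank_injOn (hx : x ∈ A (Fin.last n)) (hy : y ∈ A (Fin.last n))
    (h : rank A x = rank A y) : x = y := by
  rcases le_total (key A x) (key A y) with hk | hk
  · have hsub : (A (Fin.last n)).filter (fun z => key A z ≤ key A x) ⊆
        (A (Fin.last n)).filter (fun z => key A z ≤ key A y) := by
      intro z hz
      rw [Finset.mem_filter] at hz ⊢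
      exact ⟨hz.1, le_trans hz.2 hk⟩
    have heq := Finset.eq_of_subset_of_card_le hsub (by rw [← rank, ← rank, h])
    have hyy : y ∈ (A (Fin.last n)).filter (fun z => key A z ≤ key A x) := by
      rw [heq]; exact Finset.mem_filter.mpr ⟨hy, le_refl _⟩
    have := (Finset.mem_filter.mp hyy).2
    exact (key_injOn hx hy (le_antisymm hk this)).symm ▸ rfl
  · have hsub : (A (Fin.last n)).filter (fun z => key A z ≤ key A y) ⊆
        (A (Fin.last n)).filter (fun z => key A z ≤ key A x) := by
      intro z hz
      rw [Finset.mem_filter] at hz ⊢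
      exact ⟨hz.1, le_trans hz.2 hk⟩
    have heq := Finset.eq_of_subset_of_card_le hsub (by rw [← rank, ← rank, h])
    have hxx : x ∈ (A (Fin.last n)).filter (fun z => key A z ≤ key A y) := by
      rw [heq]; exact Finset.mem_filter.mpr ⟨hx, le_refl _⟩
    have := (Finset.mem_filter.mp hxx).2
    exact key_injOn hx hy (le_antisymm this hk)

theorem rank_image (hchain : ∀ i j : Fin (n+1), i ≤ j → A i ⊆ A j) :
    (A (Fin.last n)).image (rank A) = Finset.Icc 1 (A (Fin.last n)).card := by
  apply Finset.eq_of_subset_of_card_le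
  · intro v hv
    obtain ⟨x, hx, rfl⟩ := Finset.mem_image.mp hv
    exact Finset.mem_Icc.mpr ⟨rank_pos hx, rank_le_of_mem hchain hx⟩
  · rw [Nat.card_Icc]
    rw [Finset.card_image_of_injOn (fun x hx y hy h => rank_injOn hx hy h)]
    omega

def rinv (A : Fin (n+1) → Finset X) (x0 : X) (v : ℕ) : X :=
  if h : ∃ x, x ∈ A (Fin.last n) ∧ rank A x = v then h.choose else x0

theorem rinv_spec (hchain : ∀ i j : Fin (n+1), i ≤ j → A i ⊆ A j) (x0 : X)
    (h1 : 1 ≤ v) (h2 : v ≤ (A (Fin.last n)).card) :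
    rinv A x0 v ∈ A (Fin.last n) ∧ rank A (rinv A x0 v) = v := by
  have hv : v ∈ (A (Fin.last n)).image (rank A) := by
    rw [rank_image hchain]
    exact Finset.mem_Icc.mpr ⟨h1, h2⟩
  obtain ⟨x, hx, hr⟩ := Finset.mem_image.mp hv
  have hex : ∃ x, x ∈ A (Fin.last n) ∧ rank A x = v := ⟨x, hx, hr⟩
  rw [rinv, dif_pos hex]
  exact hex.choose_spec

theorem rinv_rank (hchain : ∀ i j : Fin (n+1), i ≤ j → A i ⊆ A j) (x0 : X)
    (hx : x ∈ A (Fin.last n)) : rinv A x0 (rank A x) = x := by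
  obtain ⟨h1, h2⟩ := rinv_spec hchain x0 (rank_pos hx) (rank_le_of_mem hchain hx)
  exact rank_injOn h1 hx h2

/-- counting lemma for sorted lists -/
theorem sorted_getD_le {l : List ℕ} (hs : l.Pairwise (· ≤ ·)) {j : ℕ} (hj : j < l.length)
    {c : ℕ} (hcount : j + 1 ≤ l.countP (fun x => x ≤ c)) : l.getD j 0 ≤ c := by
  by_contra hc
  push_neg at hc
  have hget : c < l[j] := by rwa [List.getD_eq_getElem l 0 hj] at hc
  have hsplit : l = l.take j ++ l.drop j := (List.take_append_drop j l).symm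
  have h1 : (l.take j).countP (fun x => decide (x ≤ c)) ≤ j := by
    calc (l.take j).countP (fun x => decide (x ≤ c)) ≤ (l.take j).length :=
      List.countP_le_length
    _ ≤ j := by simp
  have h2 : (l.drop j).countP (fun x => decide (x ≤ c)) = 0 := by
    rw [List.countP_eq_zero]
    intro a ha
    obtain ⟨t, ht, rfl⟩ := List.mem_iff_getElem.mp ha
    have htl : j + t < l.length := by rw [List.length_drop] at ht; omega
    rw [List.getElem_drop]
    have : l[j] ≤ l[j + t] := by
      have := List.Pairwise.rel_get_of_le hs (a := ⟨j, hj⟩)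
        (b := ⟨j + t, by rw [List.length_drop] at ht; omega⟩) (by simp)
      simpa using this
    simp only [decide_eq_true_eq]
    omega
  have : l.countP (fun x => decide (x ≤ c)) ≤ j := by
    conv_lhs => rw [hsplit]
    rw [List.countP_append, h2]
    omega
  have : l.countP (fun x => x ≤ c) ≤ j := this
  omega

theorem ofFn_getD {α β : Type*} {N : ℕ} (l : List α) (hl : l.length = N) (f : α → β) (d : α) :
    List.ofFn (fun i : Fin N => f (l.getD i d)) = l.map f := by
  apply List.ext_getElem
  · simp [hl]
  · intro i h1 h2
    rw [List.length_ofFn] at h1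
    simp only [List.getElem_ofFn, List.getElem_map]
    congr 1
    exact List.getD_eq_getElem l d (by omega)

theorem main {X : Type*} [DecidableEq X] (n : ℕ) (A : Fin (n+1) → Finset X)
    (k : Fin (n+1) → ℕ)
    (hchain : ∀ i j : Fin (n+1), i ≤ j → A i ⊆ A j) (hcard : ∀ i, (A i).card = k i)
    (hne : (A (Fin.last n)).Nonempty) :
    Nat.card {s : Multiset X |
        ∃ a : Fin (n+1) → X, (∀ i, a i ∈ A i) ∧ (↑(List.ofFn a) : Multiset X) = s}
      = Nat.card {m : Fin (n+1) → ℕ |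
          (∀ i j : Fin (n+1), i ≤ j → m i ≤ m j) ∧ ∀ i, 1 ≤ m i ∧ m i ≤ k i} := by
  classical
  obtain ⟨x0, hx0⟩ := hne
  have hkmono : ∀ i j : Fin (n+1), i ≤ j → k i ≤ k j := fun i j hij => by
    rw [← hcard, ← hcard]; exact Finset.card_le_card (hchain i j hij)
  have hklast : ∀ i, k i ≤ (A (Fin.last n)).card := fun i => by
    have := hkmono i (Fin.last n) (Fin.le_last i)
    rw [hcard]
    exact this
  -- rewriting the multiset of ranks
  have keyMap : ∀ (a : Fin (n+1) → X),
      Multiset.map (rank A) (↑(List.ofFn a) : Multiset X)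
        = Multiset.map (fun i => rank A (a i)) Finset.univ.val := by
    intro a
    rw [← Fin.univ_val_map, Multiset.map_map]
    rfl
  have lenSort : ∀ s : Multiset X,
      (∃ a : Fin (n+1) → X, (∀ i, a i ∈ A i) ∧ (↑(List.ofFn a) : Multiset X) = s) →
      ((Multiset.map (rank A) s).sort (· ≤ ·)).length = n + 1 := by
    rintro s ⟨a, _, rfl⟩
    rw [Multiset.length_sort, Multiset.card_map, Multiset.coe_card, List.length_ofFn]
  have memRight : ∀ s : Multiset X,
      (∃ a : Fin (n+1) → X, (∀ i, a i ∈ A i) ∧ (↑(List.ofFn a) : Multiset X) = s) →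
      (fun i : Fin (n+1) => ((Multiset.map (rank A) s).sort (· ≤ ·)).getD i 0) ∈
        {m : Fin (n+1) → ℕ |
          (∀ i j : Fin (n+1), i ≤ j → m i ≤ m j) ∧ ∀ i, 1 ≤ m i ∧ m i ≤ k i} := by
    intro s hs
    have hlen := lenSort s hs
    obtain ⟨a, ha, rfl⟩ := hs
    set l := ((Multiset.map (rank A) (↑(List.ofFn a) : Multiset X)).sort (· ≤ ·)) with hl
    have hsorted : l.Pairwise (· ≤ ·) := Multiset.pairwise_sort _ _
    refine ⟨fun i j hij => ?_, fun i => ⟨?_, ?_⟩⟩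
    · -- monotone
      show l.getD (↑i) 0 ≤ l.getD (↑j) 0
      have h1 : (i : ℕ) < l.length := by rw [hlen]; exact i.2
      have h2 : (j : ℕ) < l.length := by rw [hlen]; exact j.2
      rw [List.getD_eq_getElem l 0 h1, List.getD_eq_getElem l 0 h2]
      exact List.Pairwise.rel_get_of_le hsorted (a := ⟨i, h1⟩) (b := ⟨j, h2⟩) hij
    · -- positivity
      show 1 ≤ l.getD (↑i) 0
      have h1 : (i : ℕ) < l.length := by rw [hlen]; exact i.2
      rw [List.getD_eq_getElem l 0 h1]
      have hmem : l[(i:ℕ)] ∈ l := List.getElem_mem _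
      rw [← Multiset.mem_coe, Multiset.sort_eq] at hmem
      obtain ⟨y, hy, heq⟩ := Multiset.mem_map.mp hmem
      rw [Multiset.mem_coe, List.mem_ofFn] at hy
      obtain ⟨t, rfl⟩ := hy
      rw [← heq]
      exact rank_pos (hchain t (Fin.last n) (Fin.le_last t) (ha t))
    · -- upper bound via counting
      have h1 : (i : ℕ) < l.length := by rw [hlen]; exact i.2
      apply sorted_getD_le hsorted h1
      have hcnt : l.countP (fun x => x ≤ k i)
          = Multiset.countP (fun x => x ≤ k i)
              (Multiset.map (rank A) (↑(List.ofFn a) : Multiset X)) := by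
        conv_rhs => rw [← Multiset.sort_eq
          (Multiset.map (rank A) (↑(List.ofFn a) : Multiset X)) (· ≤ ·)]
        rw [Multiset.coe_countP]
      rw [hcnt, keyMap, Multiset.countP_map]
      have : (Finset.Iic i).card ≤
          Multiset.card (Finset.univ.val.filter (fun t => rank A (a t) ≤ k i)) := by
        rw [← Finset.filter_val, ← Finset.card_def]
        apply Finset.card_le_card
        intro t ht
        rw [Finset.mem_Iic] at ht
        refine Finset.mem_filter.mpr ⟨Finset.mem_univ t, ?_⟩
        calc rank A (a t) ≤ (A t).card := rank_le_of_mem hchain (ha t)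
        _ = k t := hcard t
        _ ≤ k i := hkmono t i ht
      rw [Fin.card_Iic] at this
      exact this
  have memLeft : ∀ m : Fin (n+1) → ℕ,
      ((∀ i j : Fin (n+1), i ≤ j → m i ≤ m j) ∧ ∀ i, 1 ≤ m i ∧ m i ≤ k i) →
      (↑(List.ofFn fun i => rinv A x0 (m i)) : Multiset X) ∈
        {s : Multiset X | ∃ a : Fin (n+1) → X,
          (∀ i, a i ∈ A i) ∧ (↑(List.ofFn a) : Multiset X) = s} := by
    intro m hm
    refine ⟨fun i => rinv A x0 (m i), fun i => ?_, rfl⟩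
    obtain ⟨hspec1, hspec2⟩ := rinv_spec hchain x0 (hm.2 i).1 (le_trans (hm.2 i).2 (hklast i))
    apply mem_of_rank_le hchain hspec1
    rw [hspec2, hcard]
    exact (hm.2 i).2
  apply Nat.card_congr
  refine ⟨fun sp => ⟨fun i => ((Multiset.map (rank A) sp.1).sort (· ≤ ·)).getD i 0,
      memRight sp.1 sp.2⟩,
    fun mp => ⟨(↑(List.ofFn fun i => rinv A x0 (mp.1 i)) : Multiset X),
      memLeft mp.1 mp.2⟩, ?_, ?_⟩
  · rintro ⟨s, hs⟩
    apply Subtype.ext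
    dsimp only
    have hlen := lenSort s hs
    rw [ofFn_getD _ hlen]
    obtain ⟨a, ha, rfl⟩ := hs
    rw [← Multiset.map_coe, Multiset.sort_eq, Multiset.map_map]
    rw [show ((rinv A x0) ∘ (rank A)) = fun y => rinv A x0 (rank A y) from rfl]
    have : ∀ y ∈ (↑(List.ofFn a) : Multiset X), rinv A x0 (rank A y) = y := by
      intro y hy
      rw [Multiset.mem_coe, List.mem_ofFn] at hy
      obtain ⟨t, rfl⟩ := hy
      exact rinv_rank hchain x0 (hchain t (Fin.last n) (Fin.le_last t) (ha t))
    rw [Multiset.map_congr rfl this, Multiset.map_id']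
  · rintro ⟨m, hm⟩
    apply Subtype.ext
    funext i
    dsimp only
    have hrank : ∀ t : Fin (n+1), rank A (rinv A x0 (m t)) = m t := fun t =>
      (rinv_spec hchain x0 (hm.2 t).1 (le_trans (hm.2 t).2 (hklast t))).2
    have hmap : Multiset.map (rank A)
        (↑(List.ofFn fun t => rinv A x0 (m t)) : Multiset X)
          = (↑(List.ofFn m) : Multiset ℕ) := by
      rw [keyMap, ← Fin.univ_val_map (f := m)]
      exact Multiset.map_congr rfl (fun t _ => hrank t)
    rw [hmap]
    have hsorted : (List.ofFn m).Pairwise (· ≤ ·) := by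
      rw [List.pairwise_ofFn]
      intro a b hab
      exact hm.1 a b hab.le
    have hsort_eq : (↑(List.ofFn m) : Multiset ℕ).sort (· ≤ ·) = List.ofFn m := by
      apply List.Perm.eq_of_pairwise' (Multiset.pairwise_sort _ _) hsorted
      rw [← Multiset.coe_eq_coe, Multiset.sort_eq]
    rw [hsort_eq, List.getD_eq_getElem _ 0 (by rw [List.length_ofFn]; exact i.2)]
    rw [List.getElem_ofFn]

end

end Stmt10Aux

theorem stmt10 {X : Type*} [DecidableEq X] (n : ℕ) (A : Fin n → Finset X) (k : Fin n → ℕ)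
    (hchain : ∀ i j : Fin n, i ≤ j → A i ⊆ A j) (hcard : ∀ i, (A i).card = k i) :
    Nat.card {s : Multiset X |
        ∃ a : Fin n → X, (∀ i, a i ∈ A i) ∧ (↑(List.ofFn a) : Multiset X) = s}
      = Nat.card {m : Fin n → ℕ |
          (∀ i j : Fin n, i ≤ j → m i ≤ m j) ∧ ∀ i, 1 ≤ m i ∧ m i ≤ k i} := by
  cases n with
  | zero =>
    have h1 : {s : Multiset X |
        ∃ a : Fin 0 → X, (∀ i, a i ∈ A i) ∧ (↑(List.ofFn a) : Multiset X) = s} = {0} := by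
      ext s
      simp only [Set.mem_setOf_eq, Set.mem_singleton_iff]
      constructor
      · rintro ⟨a, -, rfl⟩
        simp
      · rintro rfl
        exact ⟨Fin.elim0, fun i => i.elim0, by simp⟩
    have h2 : {m : Fin 0 → ℕ |
        (∀ i j : Fin 0, i ≤ j → m i ≤ m j) ∧ ∀ i, 1 ≤ m i ∧ m i ≤ k i} = Set.univ := by
      ext m
      simp only [Set.mem_setOf_eq, Set.mem_univ, iff_true]
      exact ⟨fun i => i.elim0, fun i => i.elim0⟩
    rw [h1, h2]
    simp [Nat.card_coe_set_eq, Set.ncard_univ]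
  | succ n =>
    by_cases hne : (A (Fin.last n)).Nonempty
    · exact Stmt10Aux.main n A k hchain hcard hne
    · rw [Finset.not_nonempty_iff_eq_empty] at hne
      have h1 : {s : Multiset X |
          ∃ a : Fin (n+1) → X, (∀ i, a i ∈ A i) ∧ (↑(List.ofFn a) : Multiset X) = s} = ∅ := by
        ext s
        simp only [Set.mem_setOf_eq, Set.mem_empty_iff_false, iff_false, not_exists]
        rintro a ⟨ha, -⟩
        have := ha (Fin.last n)
        rw [hne] at this
        exact absurd this (Finset.notMem_empty _)
      have h2 : {m : Fin (n+1) → ℕ |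
          (∀ i j : Fin (n+1), i ≤ j → m i ≤ m j) ∧ ∀ i, 1 ≤ m i ∧ m i ≤ k i} = ∅ := by
        ext m
        simp only [Set.mem_setOf_eq, Set.mem_empty_iff_false, iff_false, not_and]
        intro _ hb
        have h0 := hb (Fin.last n)
        have hk0 : k (Fin.last n) = 0 := by rw [← hcard, hne, Finset.card_empty]
        omega
      rw [h1, h2]
      simp [Nat.card_coe_set_eq]
end

section
/- (Formula (6) for g(n)) Let n ≥ 7 be a natural number, and let d = n − ⌊(n−1)·log₃2⌋. Then the set of natural numbers K ≥ 1 satisfying (n−1) < (⌈(K−1)/K⌉ + n − 2K − 1)·log₂3 is nonempty, and its greatest element equals ⌊(d + √(d² − 8))/4⌋. -/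
open Real

lemma L19 : (19:ℝ)/12 < Real.logb 2 3 := by
  have h : Real.logb 2 ((2:ℝ)^(19:ℕ)) < Real.logb 2 ((3:ℝ)^(12:ℕ)) := by
    apply Real.logb_lt_logb (by norm_num) (by positivity)
    norm_num
  rw [Real.logb_pow, Real.logb_pow, Real.logb_self_eq_one (by norm_num)] at h
  push_cast at h
  linarith

lemma floor_formula (d : ℕ) (hd3 : 3 ≤ d) :
    ⌊((d : ℝ) + Real.sqrt ((d : ℝ) ^ 2 - 8)) / 4⌋₊ = (d - 1) / 2 := by
  set k := (d - 1) / 2 with hk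
  have hk1 : 1 ≤ k := by omega
  have hdk : d = 2*k+1 ∨ d = 2*k+2 := by omega
  have hd3' : (3:ℝ) ≤ (d:ℝ) := by exact_mod_cast hd3
  have h8 : (0:ℝ) ≤ (d:ℝ)^2 - 8 := by nlinarith
  set s := Real.sqrt ((d : ℝ) ^ 2 - 8) with hs
  have hs2 : s^2 = (d:ℝ)^2 - 8 := Real.sq_sqrt h8
  have hsnn : 0 ≤ s := Real.sqrt_nonneg _
  have hk1' : (1:ℝ) ≤ (k:ℝ) := by exact_mod_cast hk1
  have hdr : (d:ℝ) = 2*(k:ℝ)+1 ∨ (d:ℝ) = 2*(k:ℝ)+2 := by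
    rcases hdk with h | h
    · left; rw [h]; push_cast; ring
    · right; rw [h]; push_cast; ring
  rw [Nat.floor_eq_iff (by positivity)]
  constructor
  · have hlow : (4*(k:ℝ) - d) ≤ s := by
      rcases hdr with h' | h' <;> nlinarith [sq_nonneg (s - (4*(k:ℝ) - d))]
    linarith
  · have hup : s < 4*(k:ℝ) + 4 - d := by
      rw [hs, Real.sqrt_lt' (by rcases hdr with h' | h' <;> linarith)]
      rcases hdr with h' | h' <;> nlinarith
    push_cast
    linarith

theorem stmt13 (n : ℕ) (hn : 7 ≤ n)
    (d : ℕ) (hd : d = n - ⌊((n : ℝ) - 1) * Real.logb 3 2⌋₊) :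
    {K : ℕ | 1 ≤ K ∧ ((n : ℝ) - 1) <
        (((⌈((K : ℝ) - 1) / (K : ℝ)⌉ : ℤ) : ℝ) + (n : ℝ) - 2 * K - 1) * Real.logb 2 3}.Nonempty ∧
    ∃ G ∈ {K : ℕ | 1 ≤ K ∧ ((n : ℝ) - 1) <
        (((⌈((K : ℝ) - 1) / (K : ℝ)⌉ : ℤ) : ℝ) + (n : ℝ) - 2 * K - 1) * Real.logb 2 3},
      (∀ K ∈ {K : ℕ | 1 ≤ K ∧ ((n : ℝ) - 1) <
          (((⌈((K : ℝ) - 1) / (K : ℝ)⌉ : ℤ) : ℝ) + (n : ℝ) - 2 * K - 1) * Real.logb 2 3}, K ≤ G) ∧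
      G = ⌊((d : ℝ) + Real.sqrt ((d : ℝ) ^ 2 - 8)) / 4⌋₊ := by
  have hL := L19
  have hLpos : (0:ℝ) < Real.logb 2 3 := by linarith
  have hn' : (7:ℝ) ≤ (n:ℝ) := by exact_mod_cast hn
  have hinv : Real.logb 3 2 = (Real.logb 2 3)⁻¹ := (Real.inv_logb 2 3).symm
  set x : ℝ := ((n : ℝ) - 1) * Real.logb 3 2 with hx
  have hxeq : x = ((n:ℝ) - 1) / Real.logb 2 3 := by
    rw [hx, hinv, div_eq_mul_inv]
  have hxnn : 0 ≤ x := by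
    rw [hxeq]
    apply div_nonneg <;> linarith
  set m := ⌊x⌋₊ with hm
  have hmle : (m:ℝ) ≤ x := Nat.floor_le hxnn
  have hxlt : x < (m:ℝ) + 1 := Nat.lt_floor_add_one x
  -- K = 1 is in the set
  have hK1 : (1:ℕ) ∈ {K : ℕ | 1 ≤ K ∧ ((n : ℝ) - 1) <
      (((⌈((K : ℝ) - 1) / (K : ℝ)⌉ : ℤ) : ℝ) + (n : ℝ) - 2 * K - 1) * Real.logb 2 3} := by
    refine ⟨le_refl 1, ?_⟩
    push_cast
    norm_num
    nlinarith
  -- hence x < n - 3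
  have hxn3 : x < (n:ℝ) - 3 := by
    rw [hxeq, div_lt_iff₀ hLpos]
    nlinarith
  have hm4 : m + 4 ≤ n := by
    have : (m:ℝ) < (n:ℝ) - 3 := lt_of_le_of_lt hmle hxn3
    have h2 : (m:ℝ) + 3 < (n:ℝ) := by linarith
    have : m + 3 < n := by exact_mod_cast h2
    omega
  have hdval : d = n - m := hd
  have hd4 : 4 ≤ d := by omega
  have hdr : (d:ℝ) = (n:ℝ) - m := by
    rw [hdval]
    push_cast [Nat.cast_sub (by omega : m ≤ n)]
    ring
  -- key equivalence for K ≥ 2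
  have key : ∀ K : ℕ, 2 ≤ K →
      ((((n : ℝ) - 1) < (((⌈((K : ℝ) - 1) / (K : ℝ)⌉ : ℤ) : ℝ) + (n : ℝ) - 2 * K - 1) * Real.logb 2 3)
        ↔ 2*K + m + 1 ≤ n) := by
    intro K hK2
    have hKr : (2:ℝ) ≤ (K:ℝ) := by exact_mod_cast hK2
    have hKpos : (0:ℝ) < (K:ℝ) := by linarith
    have hceil : (⌈((K : ℝ) - 1) / (K : ℝ)⌉ : ℤ) = 1 := by
      rw [Int.ceil_eq_iff]
      constructor
      · push_cast
        have := div_pos (show (0:ℝ) < (K:ℝ) - 1 by linarith) hKpos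
        linarith
      · push_cast
        rw [div_le_one hKpos]
        linarith
    rw [hceil]
    have hrw : (((1:ℤ):ℝ) + (n:ℝ) - 2*K - 1) = (n:ℝ) - 2*K := by push_cast; ring
    rw [hrw]
    constructor
    · intro h
      have hx2 : x < (n:ℝ) - 2*K := by
        rw [hxeq, div_lt_iff₀ hLpos]; linarith
      have : (m:ℝ) + 2*K < (n:ℝ) := by linarith
      have h3 : ((m + 2*K : ℕ):ℝ) < (n:ℝ) := by push_cast; linarith
      have : m + 2*K < n := by exact_mod_cast h3
      omega
    · intro h
      have h2 : ((2*K + m + 1 : ℕ):ℝ) ≤ (n:ℝ) := by exact_mod_cast h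
      have hx2 : x < (n:ℝ) - 2*K := by
        push_cast at h2
        linarith
      rw [hxeq, div_lt_iff₀ hLpos] at hx2
      linarith
  set G := (d - 1) / 2 with hG
  have hG1 : 1 ≤ G := by omega
  refine ⟨⟨1, hK1⟩, G, ?_, ?_, (floor_formula d (by omega)).symm⟩
  · -- G is in the set
    rcases eq_or_lt_of_le hG1 with hGe | hGlt
    · rw [← hGe]; exact hK1
    · refine ⟨hG1, ?_⟩
      rw [key G hGlt]
      omega
  · intro K hK
    obtain ⟨hK1', hKcond⟩ := hK
    rcases eq_or_lt_of_le hK1' with hKe | hKlt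
    · omega
    · have := (key K hKlt).mp hKcond
      omega
end
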